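/- Let G be a group. Suppose g, h ∈ G have finite order and there exist a, b ∈ ℕ and f ∈ G with g^a = f h f⁻¹ and h^b conjugate to g. If the conjugacy class of h has polynomial growth with respect to the word length (i.e., |{α ∈ C(h) : ‖α‖ ≤ l}| bounded by a polynomial in l), then the conjugacy class of g also has polynomial growth. -/
import Mathlib


noncomputable section

/-- Word length of `g` with respect to a (symmetrized) generating set `S`. -/
def wordLength {G : Type*} [Group G] (S : Set G) (g : G) : ℕ :=
  sInf {n | ∃ l : List G, (∀ x ∈ l, x ∈ S ∨ x⁻¹ ∈ S) ∧ l.length = n ∧ l.prod = g}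

lemma wordLength_spec {G : Type*} [Group G] {S : Set G}
    (hS : Subgroup.closure S = ⊤) (x : G) :
    ∃ l : List G, (∀ y ∈ l, y ∈ S ∨ y⁻¹ ∈ S) ∧ l.length = wordLength S x ∧ l.prod = x := by
  have hx : x ∈ (Subgroup.closure S).toSubmonoid := by rw [hS]; trivial
  rw [Subgroup.closure_toSubmonoid] at hx
  obtain ⟨l, hl, hprod⟩ := Submonoid.exists_list_of_mem_closure hx
  have hne : {n | ∃ l : List G, (∀ x ∈ l, x ∈ S ∨ x⁻¹ ∈ S) ∧ l.length = n ∧ l.prod = x}.Nonempty := by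
    refine ⟨l.length, l, fun y hy => ?_, rfl, hprod⟩
    rcases hl y hy with h | h
    · exact Or.inl h
    · exact Or.inr (by simpa using h)
  exact (Nat.sInf_mem hne).imp fun l hl => ⟨hl.1, hl.2.1, hl.2.2⟩

lemma wordLength_pow {G : Type*} [Group G] {S : Set G}
    (hS : Subgroup.closure S = ⊤) (x : G) (a : ℕ) :
    wordLength S (x ^ a) ≤ a * wordLength S x := by
  obtain ⟨l, hl, hlen, hprod⟩ := wordLength_spec hS x
  refine Nat.sInf_le ⟨(List.replicate a l).flatten, ?_, ?_, ?_⟩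
  · intro y hy
    rw [List.mem_flatten] at hy
    obtain ⟨l', hl', hy⟩ := hy
    rw [List.mem_replicate] at hl'
    exact hl y (hl'.2 ▸ hy)
  · simp [List.length_flatten, hlen, List.map_replicate, mul_comm]
  · rw [List.prod_flatten]
    simp [List.map_replicate, hprod]

/-- The conjugacy class of `g` in `G`. -/
def conjClass {G : Type*} [Group G] (g : G) : Set G := {x | IsConj g x}

lemma conjGrp_pow {G : Type*} [Group G] (u g : G) (k : ℕ) :
    (u * g * u⁻¹) ^ k = u * g ^ k * u⁻¹ := by
  induction k with
  | zero => simp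
  | succ k ih => rw [pow_succ, ih, pow_succ]; group

lemma orderOf_conj' {G : Type*} [Group G] (u g : G) : orderOf (u * g * u⁻¹) = orderOf g :=
  orderOf_injective (MulAut.conj u).toMonoidHom (MulAut.conj u).injective g

/-- A subset `T` of a group `G` with word length relative to `S` grows polynomially:
the number of elements of `T` of word length at most `l` is finite and bounded by a
polynomial in `l`. -/
def PolyGrowth {G : Type*} [Group G] (S : Set G) (T : Set G) : Prop :=
  ∃ c : ℝ, 0 < c ∧ ∃ d : ℕ, ∀ l : ℕ,
    {x ∈ T | wordLength S x ≤ l}.Finite ∧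
    (({x ∈ T | wordLength S x ≤ l}).ncard : ℝ) ≤ c * (l + 1) ^ d

/-- A finitely generated group (with word length relative to `S`) is polynomially full if
the conjugacy class of every finite order element grows polynomially. -/
def PolynomiallyFull {G : Type*} [Group G] (S : Set G) : Prop :=
  ∀ g : G, 0 < orderOf g → PolyGrowth S (conjClass g)

/-- Let `G` be finitely generated by `S`. If `g, h` have finite order with
`g ^ a = f h f⁻¹` and `h ^ b` conjugate to `g` for some `a, b ∈ ℕ`, `f ∈ G`, and the
conjugacy class of `h` has polynomial growth, then so does the conjugacy class of `g`. -/
theorem stmt11 {G : Type*} [Group G] (S : Finset G)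
    (hS : Subgroup.closure (S : Set G) = ⊤)
    (g h : G) (hg : 0 < orderOf g) (hh : 0 < orderOf h)
    (a b : ℕ) (f : G) (hga : g ^ a = f * h * f⁻¹) (hhb : IsConj g (h ^ b))
    (hpol : PolyGrowth (S : Set G) (conjClass h)) :
    PolyGrowth (S : Set G) (conjClass g) := by
  set n := orderOf g with hn
  -- IsConj (g^a) h
  have hch : IsConj (g ^ a) h := by
    rw [isConj_iff]
    exact ⟨f⁻¹, by rw [hga]; group⟩
  -- coprimality
  have hcop : Nat.Coprime (a * b) n := by
    have h1 : IsConj ((g ^ a) ^ b) (h ^ b) := by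
      obtain ⟨c, hc⟩ := isConj_iff.mp hch
      exact isConj_iff.mpr ⟨c, by rw [← hc, conjGrp_pow]⟩
    have h2 : IsConj g (g ^ (a * b)) := by
      rw [pow_mul]
      exact hhb.trans h1.symm
    have h3 : orderOf (g ^ (a * b)) = n := by
      obtain ⟨c, hc⟩ := isConj_iff.mp h2
      rw [← hc, orderOf_conj']
    have h4 : n / Nat.gcd n (a * b) = n := by
      rw [← (orderOf_pos_iff.mp hg).orderOf_pow (n := a * b)]; exact h3
    rcases (Nat.div_eq_self.mp h4) with h5 | h5
    · omega
    · exact Nat.coprime_comm.mp h5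
  -- powers of conjugates
  have key : ∀ α ∈ conjClass g, IsConj h (α ^ a) ∧ orderOf α = n := by
    intro α hα
    obtain ⟨u, hu⟩ := isConj_iff.mp hα
    constructor
    · refine hch.symm.trans (isConj_iff.mpr ⟨u, ?_⟩)
      rw [← hu, conjGrp_pow]
    · rw [← hu, orderOf_conj']
  -- injectivity of α ↦ α ^ a on conjClass g
  have hinj : Set.InjOn (fun x => x ^ a) (conjClass g) := by
    intro α hα β hβ hab
    simp only at hab
    have hφ : 1 ≤ Nat.totient n := Nat.totient_pos.mpr hg
    have hmod : (a * b) ^ Nat.totient n ≡ 1 [MOD n] := Nat.ModEq.pow_totient hcop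
    have hpow : ∀ γ ∈ conjClass g, γ ^ ((a * b) ^ Nat.totient n) = γ := by
      intro γ hγ
      have := (key γ hγ).2
      calc γ ^ ((a * b) ^ Nat.totient n) = γ ^ 1 := by
            rw [pow_eq_pow_iff_modEq, this]; exact hmod
        _ = γ := pow_one γ
    have hexp : (a * b) ^ Nat.totient n = a * (b * (a * b) ^ (Nat.totient n - 1)) := by
      have h6 : Nat.totient n = (Nat.totient n - 1) + 1 := by omega
      nth_rewrite 1 [h6]
      rw [pow_succ', mul_assoc]
    calc α = α ^ ((a * b) ^ Nat.totient n) := (hpow α hα).symm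
      _ = (α ^ a) ^ (b * (a * b) ^ (Nat.totient n - 1)) := by rw [hexp]; exact pow_mul α a _
      _ = (β ^ a) ^ (b * (a * b) ^ (Nat.totient n - 1)) := by rw [hab]
      _ = β ^ ((a * b) ^ Nat.totient n) := by rw [hexp]; exact (pow_mul β a _).symm
      _ = β := hpow β hβ
  obtain ⟨c, hc, d, hbd⟩ := hpol
  refine ⟨c * (a + 1) ^ d, by positivity, d, fun l => ?_⟩
  set s := {x ∈ conjClass g | wordLength (S : Set G) x ≤ l} with hs
  set t := {x ∈ conjClass h | wordLength (S : Set G) x ≤ a * l} with ht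
  obtain ⟨htfin, htcard⟩ := hbd (a * l)
  have hmaps : ∀ x ∈ s, x ^ a ∈ t := by
    rintro x ⟨hx1, hx2⟩
    exact ⟨(key x hx1).1, le_trans (wordLength_pow hS x a) (Nat.mul_le_mul_left a hx2)⟩
  have hinj' : Set.InjOn (fun x => x ^ a) s := hinj.mono fun x hx => hx.1
  have hsfin : s.Finite :=
    Set.Finite.of_finite_image (htfin.subset (by rintro _ ⟨x, hx, rfl⟩; exact hmaps x hx)) hinj'
  refine ⟨hsfin, ?_⟩
  have h1 : (s.ncard : ℝ) ≤ (t.ncard : ℝ) := by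
    exact_mod_cast Set.ncard_le_ncard_of_injOn _ hmaps hinj' htfin
  refine h1.trans (htcard.trans ?_)
  have h2 : ((a * l : ℕ) + 1 : ℝ) ≤ (a + 1) * (l + 1) := by
    push_cast; nlinarith [Nat.cast_nonneg (α := ℝ) a, Nat.cast_nonneg (α := ℝ) l]
  calc c * ((a * l : ℕ) + 1) ^ d ≤ c * ((a + 1) * (l + 1)) ^ d := by
        apply mul_le_mul_of_nonneg_left (pow_le_pow_left₀ (by positivity) h2 d) hc.le
    _ = c * (a + 1) ^ d * (l + 1) ^ d := by rw [mul_pow]; ring
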